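/- Let X be a Lindenstrauss space satisfying property (GM): x*(x) < 1 whenever x ∈ S_X and x* lies in the weak* closure of ext(B_{X*}) \ {x*}. Then X does not contain an isometric copy of c. -/

import Mathlib

open Filter Topology Metric
open scoped ENNReal

noncomputable section

/-- The space `ℓ₁` of absolutely summable real sequences. -/
abbrev EllOne : Type := lp (fun _ : ℕ => ℝ) 1

/-- The subspace of `ℓ∞` consisting of convergent real sequences. -/
def convSeq : Subspace ℝ (lp (fun _ : ℕ => ℝ) ∞) where
  carrier := {f | ∃ l : ℝ, Tendsto (fun n => f n) atTop (𝓝 l)}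
  add_mem' := by
    rintro f g ⟨a, ha⟩ ⟨b, hb⟩
    exact ⟨a + b, by simpa [lp.coeFn_add] using ha.add hb⟩
  zero_mem' := ⟨0, by simp [lp.coeFn_zero]⟩
  smul_mem' := by
    rintro c f ⟨a, ha⟩
    exact ⟨c * a, by simpa [lp.coeFn_smul] using ha.const_mul c⟩

/-- The Banach space `c` of convergent real sequences with the sup norm,
realized as a subspace of `ℓ∞`. -/
abbrev SpaceC : Type := ↥convSeq

/-- A normed space is polyhedral if the unit ball of each of its
finite-dimensional subspaces is a polytope (the convex hull of finitely many points). -/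
def IsPolyhedralSpace (X : Type*) [NormedAddCommGroup X] [NormedSpace ℝ X] : Prop :=
  ∀ Y : Subspace ℝ X, FiniteDimensional ℝ Y →
    ∃ F : Set Y, F.Finite ∧ closedBall (0 : Y) 1 = convexHull ℝ F

/-- The set of extreme points of the closed unit ball of the dual of `X`. -/
def extBdual (X : Type*) [NormedAddCommGroup X] [NormedSpace ℝ X] :
    Set (StrongDual ℝ X) :=
  Set.extremePoints ℝ (closedBall (0 : StrongDual ℝ X) 1)

/-- `D(x) = {x* ∈ S_{X*} : x*(x) = 1}`. -/
def Dface {X : Type*} [NormedAddCommGroup X] [NormedSpace ℝ X] (x : X) :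
    Set (StrongDual ℝ X) :=
  {f | ‖f‖ = 1 ∧ f x = 1}

/-- A Lindenstrauss space: a real Banach space whose dual is isometrically
isomorphic to `L¹(μ)` for some measure `μ`. -/
def IsLindenstrauss (X : Type) [NormedAddCommGroup X] [NormedSpace ℝ X] : Prop :=
  ∃ (α : Type) (_ : MeasurableSpace α) (μ : MeasureTheory.Measure α),
    Nonempty (StrongDual ℝ X ≃ₗᵢ[ℝ] MeasureTheory.Lp ℝ 1 μ)

def oneC : SpaceC :=
  ⟨⟨(fun _ => (1:ℝ)), memℓp_infty ⟨1, by rintro x ⟨i, rfl⟩; simp⟩⟩, ⟨1, tendsto_const_nhds⟩⟩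

def deltaC (n : ℕ) : SpaceC :=
  ⟨lp.single (E := fun _ : ℕ => ℝ) ∞ n (1:ℝ), ⟨0, by
    apply Tendsto.congr' (f₁ := fun _ => (0:ℝ))
    · filter_upwards [eventually_ge_atTop (n+1)] with k hk
      exact (lp.single_apply_ne (E := fun _ : ℕ => ℝ) ∞ n 1 (show k ≠ n by omega)).symm
    · exact tendsto_const_nhds⟩⟩

lemma coord_norm_le (y : SpaceC) (n : ℕ) : ‖(y : lp (fun _ : ℕ => ℝ) ∞) n‖ ≤ ‖y‖ :=
  lp.norm_apply_le_norm (by norm_num) _ n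

lemma spaceC_norm (y : SpaceC) : ‖y‖ = ‖(y : lp (fun _ : ℕ => ℝ) ∞)‖ := rfl

lemma spaceC_norm_le {y : SpaceC} {C : ℝ} (hC : 0 ≤ C)
    (h : ∀ n, ‖(y : lp (fun _ : ℕ => ℝ) ∞) n‖ ≤ C) : ‖y‖ ≤ C := by
  rw [spaceC_norm]; exact lp.norm_le_of_forall_le hC h

lemma oneC_apply (n : ℕ) : ((oneC : SpaceC) : lp (fun _ : ℕ => ℝ) ∞) n = 1 := rfl

lemma deltaC_apply_self (n : ℕ) : ((deltaC n : SpaceC) : lp (fun _ : ℕ => ℝ) ∞) n = 1 :=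
  lp.single_apply_self ∞ n 1

lemma deltaC_apply_ne {n k : ℕ} (h : k ≠ n) :
    ((deltaC n : SpaceC) : lp (fun _ : ℕ => ℝ) ∞) k = 0 :=
  lp.single_apply_ne ∞ n 1 h

lemma norm_oneC : ‖(oneC : SpaceC)‖ = 1 := by
  refine le_antisymm (spaceC_norm_le zero_le_one fun i => by rw [oneC_apply]; norm_num) ?_
  have := coord_norm_le oneC 0
  rwa [oneC_apply, norm_one] at this

lemma norm_deltaC (n : ℕ) : ‖(deltaC n : SpaceC)‖ = 1 := by
  refine le_antisymm (spaceC_norm_le zero_le_one fun i => ?_) ?_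
  · rcases eq_or_ne i n with rfl | h
    · rw [deltaC_apply_self]; norm_num
    · rw [deltaC_apply_ne h]; norm_num
  · have := coord_norm_le (deltaC n) n
    rwa [deltaC_apply_self, norm_one] at this

lemma spaceC_coe_add (y z : SpaceC) (k : ℕ) :
    ((y + z : SpaceC) : lp (fun _ : ℕ => ℝ) ∞) k
      = (y : lp (fun _ : ℕ => ℝ) ∞) k + (z : lp (fun _ : ℕ => ℝ) ∞) k := by
  have h : ((y + z : SpaceC) : lp (fun _ : ℕ => ℝ) ∞)
      = (y : lp (fun _ : ℕ => ℝ) ∞) + (z : lp (fun _ : ℕ => ℝ) ∞) := rfl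
  rw [h, lp.coeFn_add]; rfl

lemma spaceC_coe_smul (c : ℝ) (y : SpaceC) (k : ℕ) :
    ((c • y : SpaceC) : lp (fun _ : ℕ => ℝ) ∞) k = c * (y : lp (fun _ : ℕ => ℝ) ∞) k := by
  have h : ((c • y : SpaceC) : lp (fun _ : ℕ => ℝ) ∞)
      = c • (y : lp (fun _ : ℕ => ℝ) ∞) := rfl
  rw [h, lp.coeFn_smul]; rfl

lemma spaceC_coe_sub (y z : SpaceC) (k : ℕ) :
    ((y - z : SpaceC) : lp (fun _ : ℕ => ℝ) ∞) k
      = (y : lp (fun _ : ℕ => ℝ) ∞) k - (z : lp (fun _ : ℕ => ℝ) ∞) k := by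
  have h : ((y - z : SpaceC) : lp (fun _ : ℕ => ℝ) ∞)
      = (y : lp (fun _ : ℕ => ℝ) ∞) - (z : lp (fun _ : ℕ => ℝ) ∞) := rfl
  rw [h, lp.coeFn_sub]; rfl

def coordCLM (n : ℕ) : SpaceC →L[ℝ] ℝ :=
  LinearMap.mkContinuous
    { toFun := fun y => (y : lp (fun _ : ℕ => ℝ) ∞) n
      map_add' := fun y z => spaceC_coe_add y z n
      map_smul' := fun c y => spaceC_coe_smul c y n }
    1 (fun y => by rw [one_mul]; exact coord_norm_le y n)

lemma coordCLM_apply (n : ℕ) (y : SpaceC) :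
    coordCLM n y = (y : lp (fun _ : ℕ => ℝ) ∞) n := rfl

variable {X : Type} [NormedAddCommGroup X] [NormedSpace ℝ X]

lemma lemA (T : SpaceC →ₗᵢ[ℝ] X) (n : ℕ) {G : X →L[ℝ] ℝ} (hG : ‖G‖ ≤ 1)
    (h1 : G (T (deltaC n)) = 1) (y : SpaceC) :
    G (T y) = (y : lp (fun _ : ℕ => ℝ) ∞) n := by
  have key : ∀ w : SpaceC, ‖w‖ ≤ 1 → (w : lp (fun _ : ℕ => ℝ) ∞) n = 0 → G (T w) ≤ 0 := by
    intro w hw hwn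
    have hnorm : ‖deltaC n + w‖ ≤ 1 := by
      refine spaceC_norm_le zero_le_one fun k => ?_
      rcases eq_or_ne k n with rfl | hk
      · rw [spaceC_coe_add, deltaC_apply_self k, hwn]; norm_num
      · rw [spaceC_coe_add, deltaC_apply_ne hk, zero_add]
        exact (coord_norm_le w k).trans hw
    have hle : G (T (deltaC n + w)) ≤ 1 := by
      have h2 := G.le_opNorm (T (deltaC n + w))
      rw [T.norm_map] at h2
      have : |G (T (deltaC n + w))| ≤ 1 := by
        refine h2.trans ?_
        calc ‖G‖ * ‖deltaC n + w‖ ≤ 1 * 1 :=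
          mul_le_mul hG hnorm (norm_nonneg _) zero_le_one
        _ = 1 := one_mul 1
      exact (le_abs_self _).trans this
    rw [T.map_add, G.map_add, h1] at hle
    linarith
  have claim0 : ∀ w : SpaceC, ‖w‖ ≤ 1 → (w : lp (fun _ : ℕ => ℝ) ∞) n = 0 → G (T w) = 0 := by
    intro w hw hwn
    have h1' := key w hw hwn
    have h2' := key (-w) (by rw [norm_neg]; exact hw) (by
      have : ((-w : SpaceC) : lp (fun _ : ℕ => ℝ) ∞) n
          = (0 : ℝ) - (w : lp (fun _ : ℕ => ℝ) ∞) n := by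
        have h := spaceC_coe_sub 0 w n
        simpa using h
      rw [this, hwn]; ring)
    rw [T.map_neg, G.map_neg] at h2'
    linarith
  set c : ℝ := (y : lp (fun _ : ℕ => ℝ) ∞) n with hc
  set z : SpaceC := y - c • deltaC n with hzdef
  have hzn : (z : lp (fun _ : ℕ => ℝ) ∞) n = 0 := by
    rw [hzdef, spaceC_coe_sub, spaceC_coe_smul, deltaC_apply_self, mul_one, ← hc, sub_self]
  have hyz : y = z + c • deltaC n := by rw [hzdef]; abel
  have hGz : G (T z) = 0 := by
    rcases eq_or_ne z 0 with h0 | h0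
    · rw [h0]; simp
    · have hzpos : (0:ℝ) < ‖z‖ := norm_pos_iff.mpr h0
      have hu := claim0 (‖z‖⁻¹ • z) (le_of_eq (norm_smul_inv_norm h0))
        (by rw [spaceC_coe_smul, hzn, mul_zero])
      rw [T.map_smul, G.map_smul] at hu
      have : ‖z‖⁻¹ * G (T z) = 0 := hu
      rcases mul_eq_zero.mp this with h | h
      · exact absurd h (inv_ne_zero (ne_of_gt hzpos))
      · exact h
  calc G (T y) = G (T z) + c * G (T (deltaC n)) := by
        rw [hyz, T.map_add, G.map_add, T.map_smul, G.map_smul]; rfl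
  _ = c := by rw [hGz, h1]; ring

lemma lemB (T : SpaceC →ₗᵢ[ℝ] X) (n : ℕ) :
    ∃ G : X →L[ℝ] ℝ, ‖G‖ ≤ 1 ∧
      ∀ y : SpaceC, G (T y) = (y : lp (fun _ : ℕ => ℝ) ∞) n := by
  set p := LinearMap.range T.toLinearMap with hp
  set e := T.equivRange with he
  set f : p →L[ℝ] ℝ :=
    (coordCLM n).comp e.symm.toLinearIsometry.toContinuousLinearMap with hf
  obtain ⟨g, hg, hnorm⟩ := exists_extension_norm_eq p f
  have hfnorm : ‖f‖ ≤ 1 := by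
    refine ContinuousLinearMap.opNorm_le_bound f zero_le_one fun x => ?_
    rw [one_mul]
    have : f x = coordCLM n (e.symm x) := rfl
    rw [this, coordCLM_apply]
    exact (coord_norm_le (e.symm x) n).trans (le_of_eq (e.symm.norm_map x))
  refine ⟨g, hnorm.le.trans hfnorm, fun y => ?_⟩
  have hmem : T y ∈ p := LinearMap.mem_range.mpr ⟨y, rfl⟩
  have h1 := hg ⟨T y, hmem⟩
  have h2 : e.symm ⟨T y, hmem⟩ = y := by
    apply e.injective
    rw [e.apply_symm_apply]
    exact Subtype.ext rfl
  calc g (T y) = f ⟨T y, hmem⟩ := h1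
  _ = coordCLM n (e.symm ⟨T y, hmem⟩) := rfl
  _ = (y : lp (fun _ : ℕ => ℝ) ∞) n := by rw [h2, coordCLM_apply]

instance weakDualLCS (Y : Type) [NormedAddCommGroup Y] [NormedSpace ℝ Y] :
    LocallyConvexSpace ℝ (WeakDual ℝ Y) := WeakBilin.locallyConvexSpace


set_option maxHeartbeats 2000000 in
/-- A Lindenstrauss space with property (GM) contains no isometric copy of `c`. -/
theorem lindenstrauss_gm_no_isometric_c
    {X : Type} [NormedAddCommGroup X] [NormedSpace ℝ X] [CompleteSpace X]
    (hL : IsLindenstrauss X)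
    (hgm : ∀ x : X, ‖x‖ = 1 → ∀ f : StrongDual ℝ X,
      StrongDual.toWeakDual f ∈
        closure (StrongDual.toWeakDual '' (extBdual X \ {f})) → f x < 1) :
    ¬ Nonempty (SpaceC →ₗᵢ[ℝ] X) := by
  rintro ⟨T⟩
  classical
  set K : Set (WeakDual ℝ X) := WeakDual.toStrongDual ⁻¹' closedBall 0 1 with hK
  have hKcomp : IsCompact K := WeakDual.isCompact_closedBall (𝕜 := ℝ) (E := X) 0 1
  have hKdef : ∀ F : WeakDual ℝ X, F ∈ K ↔ ‖WeakDual.toStrongDual F‖ ≤ 1 := fun F => by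
    simp [hK, mem_closedBall_zero_iff]
  set S : ℕ → Set (WeakDual ℝ X) := fun n =>
    {F | F ∈ K ∧ ∀ y : SpaceC, F (T y) = (y : lp (fun _ : ℕ => ℝ) ∞) n} with hS
  -- compactness
  have hScomp : ∀ n, IsCompact (S n) := by
    intro n
    have heq : S n = K ∩ {F : WeakDual ℝ X |
        ∀ y : SpaceC, F (T y) = (y : lp (fun _ : ℕ => ℝ) ∞) n} := rfl
    rw [heq]
    refine hKcomp.inter_right ?_
    rw [Set.setOf_forall]
    exact isClosed_iInter fun y =>
      isClosed_eq (WeakDual.eval_continuous (T y)) continuous_const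
  -- nonemptiness
  have hSne : ∀ n, (S n).Nonempty := by
    intro n
    obtain ⟨G, hG1, hG2⟩ := lemB T n
    exact ⟨StrongDual.toWeakDual G, (hKdef _).mpr hG1, fun y => hG2 y⟩
  -- extreme points of the sections
  have hextne : ∀ n, (Set.extremePoints ℝ (S n)).Nonempty := fun n =>
    (hScomp n).extremePoints_nonempty (hSne n)
  choose Fw hFw using hextne
  have hFwS : ∀ n, Fw n ∈ S n := fun n => (hFw n).1
  have hvalues : ∀ n (y : SpaceC),
      Fw n (T y) = (y : lp (fun _ : ℕ => ℝ) ∞) n := fun n => (hFwS n).2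
  -- the face argument: each Fw n is extreme in the closed unit ball
  have hface : ∀ n, WeakDual.toStrongDual (Fw n) ∈ extBdual X := by
    intro n
    rw [extBdual, mem_extremePoints]
    refine ⟨mem_closedBall_zero_iff.mpr ((hKdef _).mp (hFwS n).1), ?_⟩
    rintro G₁ hG₁ G₂ hG₂ ⟨a, b, ha, hb, hab, hcomb⟩
    have hn₁ : ‖G₁‖ ≤ 1 := mem_closedBall_zero_iff.mp hG₁
    have hn₂ : ‖G₂‖ ≤ 1 := mem_closedBall_zero_iff.mp hG₂
    have hval : a * G₁ (T (deltaC n)) + b * G₂ (T (deltaC n)) = 1 := by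
      have h2 := congrArg (fun G : X →L[ℝ] ℝ => G (T (deltaC n))) hcomb
      simp only [ContinuousLinearMap.add_apply, ContinuousLinearMap.coe_smul',
        Pi.smul_apply, smul_eq_mul] at h2
      rw [h2]
      have h3 : (WeakDual.toStrongDual (Fw n)) (T (deltaC n)) = Fw n (T (deltaC n)) := rfl
      rw [h3, hvalues n (deltaC n), deltaC_apply_self]
    have hb₁ : G₁ (T (deltaC n)) ≤ 1 := by
      have h := G₁.le_opNorm (T (deltaC n))
      rw [T.norm_map, norm_deltaC, mul_one] at h
      exact (le_abs_self _).trans (h.trans hn₁)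
    have hb₂ : G₂ (T (deltaC n)) ≤ 1 := by
      have h := G₂.le_opNorm (T (deltaC n))
      rw [T.norm_map, norm_deltaC, mul_one] at h
      exact (le_abs_self _).trans (h.trans hn₂)
    have e₁ : G₁ (T (deltaC n)) = 1 := by nlinarith
    have e₂ : G₂ (T (deltaC n)) = 1 := by nlinarith
    have m₁ : StrongDual.toWeakDual G₁ ∈ S n :=
      ⟨(hKdef _).mpr hn₁, fun y => lemA T n hn₁ e₁ y⟩
    have m₂ : StrongDual.toWeakDual G₂ ∈ S n :=
      ⟨(hKdef _).mpr hn₂, fun y => lemA T n hn₂ e₂ y⟩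
    have hseg : Fw n ∈ openSegment ℝ
        (StrongDual.toWeakDual G₁) (StrongDual.toWeakDual G₂) := by
      refine ⟨a, b, ha, hb, hab, ?_⟩
      have : a • StrongDual.toWeakDual G₁ + b • StrongDual.toWeakDual G₂
          = StrongDual.toWeakDual (a • G₁ + b • G₂) := rfl
      rw [this, hcomb]; rfl
    have hex : ∀ x₁ ∈ S n, ∀ x₂ ∈ S n, Fw n ∈ openSegment ℝ x₁ x₂ → x₁ = Fw n ∧ x₂ = Fw n :=
      (mem_extremePoints.mp (hFw n)).2
    obtain ⟨q₁, q₂⟩ := hex (StrongDual.toWeakDual G₁) m₁ (StrongDual.toWeakDual G₂) m₂ hseg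
    exact ⟨by rw [← q₁]; rfl, by rw [← q₂]; rfl⟩
  -- cluster point
  have hrangeK : ∀ n, Fw n ∈ K := fun n => (hFwS n).1
  have hmapK : Filter.map Fw atTop ≤ 𝓟 K :=
    le_principal_iff.mpr (mem_map.mpr (Eventually.of_forall hrangeK))
  obtain ⟨Fl, _, hcl⟩ := hKcomp.exists_clusterPt hmapK
  set f : StrongDual ℝ X := WeakDual.toStrongDual Fl with hfdef
  have hclx : ∀ x : X, ClusterPt (Fl x) (Filter.map (fun n => Fw n x) atTop) := by
    intro x
    refine hcl.map ((WeakDual.eval_continuous x).continuousAt) ?_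
    rw [Filter.tendsto_map'_iff]
    exact tendsto_map
  have hlim : ∀ (x : X) (L : ℝ),
      Tendsto (fun n => Fw n x) atTop (𝓝 L) → Fl x = L := by
    intro x L hL
    exact eq_of_nhds_neBot ((hclx x).mono hL)
  have hone : Fl (T oneC) = 1 := by
    refine hlim _ 1 ?_
    have : (fun n => Fw n (T oneC)) = fun _ => (1:ℝ) := by
      funext n; rw [hvalues n oneC, oneC_apply]
    rw [this]; exact tendsto_const_nhds
  have hdelta : ∀ m, Fl (T (deltaC m)) = 0 := by
    intro m
    refine hlim _ 0 ?_
    refine Tendsto.congr' ?_ (tendsto_const_nhds : Tendsto (fun _ : ℕ => (0:ℝ)) atTop (𝓝 0))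
    filter_upwards [eventually_ge_atTop (m+1)] with n hn
    rw [hvalues n (deltaC m), deltaC_apply_ne (show n ≠ m by omega)]
  have hne : ∀ m, WeakDual.toStrongDual (Fw m) ≠ f := by
    intro m h
    have h1 : Fw m (T (deltaC m)) = 1 := by
      rw [hvalues m (deltaC m), deltaC_apply_self]
    have h2 := congrArg (fun G : X →L[ℝ] ℝ => G (T (deltaC m))) h
    replace h2 : (WeakDual.toStrongDual (Fw m)) (T (deltaC m)) = f (T (deltaC m)) := h2
    have h3 : (WeakDual.toStrongDual (Fw m)) (T (deltaC m)) = Fw m (T (deltaC m)) := rfl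
    have h4 : f (T (deltaC m)) = Fl (T (deltaC m)) := rfl
    rw [h3, h4, h1, hdelta m] at h2
    exact one_ne_zero h2
  have hmemcl : StrongDual.toWeakDual f ∈
      closure (StrongDual.toWeakDual '' (extBdual X \ {f})) := by
    have hfl : StrongDual.toWeakDual f = Fl := rfl
    rw [hfl, mem_closure_iff_clusterPt]
    refine hcl.mono (le_principal_iff.mpr (mem_map.mpr (Eventually.of_forall fun n => ?_)))
    exact ⟨WeakDual.toStrongDual (Fw n), ⟨hface n, hne n⟩, rfl⟩
  have hnormone : ‖T oneC‖ = 1 := by rw [T.norm_map, norm_oneC]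
  have hcontr := hgm (T oneC) hnormone f hmemcl
  have : f (T oneC) = Fl (T oneC) := rfl
  rw [this, hone] at hcontr
  exact lt_irrefl 1 hcontr


end
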